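/- Inverses of effect-domination-preserving diffeomorphisms (Lemma D.5 / dom-preserving-map-inverse). Let G be a DAG on [d] and let ψ : ℝ^d → ℝ^d be a C¹-diffeomorphism such that for every i ∈ [d], the component ψ_i(z) depends only on the coordinates z_j with j ∈ \bar{dom}_G(i) (i.e. ψ_i(z) = ψ_i(z′) whenever z_j = z′_j for all j ∈ \bar{dom}_G(i)). Then for every j ∈ [d], the component (ψ^{−1})_j(v) of the inverse map depends only on the coordinates v_ℓ with ℓ ∈ \bar{dom}_G(j). -/

import Mathlib

open Matrix MeasureTheory

/-- `E i j` means there is a directed edge `i → j`. A DAG has no directed cycles. -/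
def IsDAG {d : ℕ} (E : Fin d → Fin d → Prop) : Prop :=
  ∀ i, ¬ Relation.TransGen E i i

/-- The set of parents of `i`. -/
def pa {d : ℕ} (E : Fin d → Fin d → Prop) (i : Fin d) : Set (Fin d) := {j | E j i}

/-- The set of children of `i`. -/
def ch {d : ℕ} (E : Fin d → Fin d → Prop) (i : Fin d) : Set (Fin d) := {j | E i j}

/-- `pa_G(i) ∪ {i}`. -/
def barPa {d : ℕ} (E : Fin d → Fin d → Prop) (i : Fin d) : Set (Fin d) := insert i (pa E i)

/-- `ch_G(i) ∪ {i}`. -/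
def barCh {d : ℕ} (E : Fin d → Fin d → Prop) (i : Fin d) : Set (Fin d) := insert i (ch E i)

/-- The effect-domination set `dom_G(i) = {j ∈ pa_G(i) : ch_G(i) ⊆ ch_G(j)}`. -/
def domSet {d : ℕ} (E : Fin d → Fin d → Prop) (i : Fin d) : Set (Fin d) :=
  {j | j ∈ pa E i ∧ ch E i ⊆ ch E j}

/-- `dom_G(i) ∪ {i}`. -/
def barDom {d : ℕ} (E : Fin d → Fin d → Prop) (i : Fin d) : Set (Fin d) :=
  insert i (domSet E i)

/-- Ancestors of `i`: nodes with a directed path to `i`. -/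
def ans {d : ℕ} (E : Fin d → Fin d → Prop) (i : Fin d) : Set (Fin d) :=
  {j | Relation.TransGen E j i}

/-- A set is ancestral if it is closed under taking ancestors. -/
def Ancestral {d : ℕ} (E : Fin d → Fin d → Prop) (S : Set (Fin d)) : Prop :=
  ∀ j ∈ S, ans E j ⊆ S

/-- The support of `B` matches the graph: `B i j ≠ 0 ↔ j ∈ \bar{pa}_G(i)`. -/
def SupportMatches {d : ℕ} (E : Fin d → Fin d → Prop) (B : Matrix (Fin d) (Fin d) ℝ) : Prop :=
  ∀ i j, B i j ≠ 0 ↔ j ∈ barPa E i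

/-- Node-level non-degeneracy: for every node `i`, the span of the `i`-th rows
`(B_k)_i` has dimension `|pa_G(i)| + 1`. -/
def NodeNonDegenerate {d K : ℕ} (E : Fin d → Fin d → Prop)
    (B : Fin K → Matrix (Fin d) (Fin d) ℝ) : Prop :=
  ∀ i, Module.finrank ℝ (Submodule.span ℝ (Set.range fun k => B k i)) = (pa E i).ncard + 1

/-- A function `f : ℝ^d → ℝ` depends only on the coordinates in `S`. -/
def DependsOnlyOn {d : ℕ} (S : Set (Fin d)) (f : (Fin d → ℝ) → ℝ) : Prop :=
  ∀ z z' : Fin d → ℝ, (∀ j ∈ S, z j = z' j) → f z = f z'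

section Aux

variable {d : ℕ}

lemma barDom_refl (E : Fin d → Fin d → Prop) (i : Fin d) : i ∈ barDom E i :=
  Set.mem_insert _ _

lemma barDom_trans (E : Fin d → Fin d → Prop) {i j k : Fin d}
    (hk : k ∈ barDom E j) (hj : j ∈ barDom E i) : k ∈ barDom E i := by
  rcases hj with rfl | hj
  · exact hk
  rcases hk with rfl | hk
  · exact Set.mem_insert_iff.mpr (Or.inr hj)
  · refine Set.mem_insert_iff.mpr (Or.inr ⟨hk.2 hj.1, fun x hx => hk.2 (hj.2 hx)⟩)

/-- Matrices supported on the reflexive-transitive relation `ℓ ∈ barDom i` form a subalgebra. -/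
def lowerAlg (E : Fin d → Fin d → Prop) : Subalgebra ℝ (Matrix (Fin d) (Fin d) ℝ) where
  carrier := {A | ∀ i ℓ, ℓ ∉ barDom E i → A i ℓ = 0}
  mul_mem' := by
    intro A B hA hB i ℓ hℓ
    classical
    simp only [Matrix.mul_apply]
    apply Finset.sum_eq_zero
    intro j _
    by_cases hj : j ∈ barDom E i
    · have : ℓ ∉ barDom E j := fun h => hℓ (barDom_trans E h hj)
      rw [hB j ℓ this, mul_zero]
    · rw [hA i j hj, zero_mul]
  add_mem' := by
    intro A B hA hB i ℓ h
    simp only [Matrix.add_apply, hA i ℓ h, hB i ℓ h, add_zero]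
  algebraMap_mem' := by
    intro r i ℓ h
    have hne : ℓ ≠ i := by rintro rfl; exact h (barDom_refl E ℓ)
    simp [Matrix.algebraMap_matrix_apply, Ne.symm hne]

lemma lowerAlg_inv (E : Fin d → Fin d → Prop) {A B : Matrix (Fin d) (Fin d) ℝ}
    (hA : A ∈ lowerAlg E) (hAB : A * B = 1) (hBA : B * A = 1) : B ∈ lowerAlg E := by
  classical
  set S := Subalgebra.toSubmodule (lowerAlg E) with hS
  have hA' : A ∈ S := hA
  have hmem : ∀ X ∈ S, A * X ∈ S := by
    intro X hX
    rw [hS, Subalgebra.mem_toSubmodule] at hX ⊢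
    exact mul_mem hA hX
  let L : S →ₗ[ℝ] S :=
    { toFun := fun x => ⟨A * (x : Matrix (Fin d) (Fin d) ℝ), hmem _ x.2⟩
      map_add' := by intro x y; ext : 1; simp [mul_add]
      map_smul' := by intro r x; ext : 1; simp [Matrix.mul_smul] }
  have hinj : Function.Injective L := by
    intro x y hxy
    have h1 : A * (x : Matrix (Fin d) (Fin d) ℝ) = A * (y : Matrix (Fin d) (Fin d) ℝ) :=
      congrArg Subtype.val hxy
    have h2 : B * (A * (x : Matrix (Fin d) (Fin d) ℝ))
        = B * (A * (y : Matrix (Fin d) (Fin d) ℝ)) := by rw [h1]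
    rw [← mul_assoc, ← mul_assoc, hBA, one_mul, one_mul] at h2
    exact Subtype.ext h2
  have hsurj : Function.Surjective L := LinearMap.injective_iff_surjective.mp hinj
  have h1S : (1 : Matrix (Fin d) (Fin d) ℝ) ∈ S := one_mem (lowerAlg E)
  obtain ⟨c, hc⟩ := hsurj ⟨1, h1S⟩
  have hAc : A * (c : Matrix (Fin d) (Fin d) ℝ) = 1 := congrArg Subtype.val hc
  have hcB : (c : Matrix (Fin d) (Fin d) ℝ) = B := by
    calc (c : Matrix (Fin d) (Fin d) ℝ) = (B * A) * c := by rw [hBA, one_mul]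
    _ = B * (A * c) := by rw [mul_assoc]
    _ = B := by rw [hAc, mul_one]
  rw [← hcB]; exact c.2

/-- A directional derivative of a function that depends only on `S` vanishes in
directions supported outside `S`. -/
lemma dependsOnlyOn_deriv_zero {S : Set (Fin d)} {f : (Fin d → ℝ) → ℝ}
    {D : (Fin d → ℝ) →L[ℝ] ℝ} {z : Fin d → ℝ}
    (hf : DependsOnlyOn S f) (hD : HasFDerivAt f D z) (u : Fin d → ℝ)
    (hu : ∀ j ∈ S, u j = 0) : D u = 0 := by
  have hline : HasDerivAt (fun t : ℝ => z + t • u) u 0 := by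
    simpa using ((hasDerivAt_id (0:ℝ)).smul_const u).const_add z
  have hz : z + (0:ℝ) • u = z := by simp
  have hcomp : HasDerivAt (fun t : ℝ => f (z + t • u)) (D u) 0 :=
    HasFDerivAt.comp_hasDerivAt 0 (by rwa [hz]) hline
  have hconst : (fun t : ℝ => f (z + t • u)) = fun _ => f z := by
    funext t
    exact hf _ _ (fun j hj => by simp [hu j hj])
  rw [hconst] at hcomp
  have h0 : HasDerivAt (fun _ : ℝ => f z) (0:ℝ) 0 := hasDerivAt_const 0 _
  exact hcomp.unique h0

end Aux

/-- Inverses of effect-domination-preserving C¹-diffeomorphisms (Lemma D.5). -/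
theorem dom_preserving_map_inverse {d : ℕ} (E : Fin d → Fin d → Prop) (hG : IsDAG E)
    (ψ ψinv : (Fin d → ℝ) → (Fin d → ℝ))
    (hψ : ContDiff ℝ 1 ψ) (hψinv : ContDiff ℝ 1 ψinv)
    (hleft : Function.LeftInverse ψinv ψ) (hright : Function.RightInverse ψinv ψ)
    (hdep : ∀ i, DependsOnlyOn (barDom E i) (fun z => ψ z i)) :
    ∀ j, DependsOnlyOn (barDom E j) (fun v => ψinv v j) := by
  classical
  have hψd : Differentiable ℝ ψ := hψ.differentiable one_ne_zero
  have hψinvd : Differentiable ℝ ψinv := hψinv.differentiable one_ne_zero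
  -- Jacobian matrices of ψ lie in the subalgebra
  have hAmem : ∀ z : Fin d → ℝ,
      LinearMap.toMatrix' ((fderiv ℝ ψ z : (Fin d → ℝ) →L[ℝ] (Fin d → ℝ)) :
        (Fin d → ℝ) →ₗ[ℝ] (Fin d → ℝ)) ∈ lowerAlg E := by
    intro z i ℓ hℓ
    rw [LinearMap.toMatrix'_apply]
    have hproj' : HasFDerivAt (⇑(ContinuousLinearMap.proj i :
          (Fin d → ℝ) →L[ℝ] ℝ) ∘ ψ)
        ((ContinuousLinearMap.proj i).comp (fderiv ℝ ψ z)) z :=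
      (ContinuousLinearMap.proj i).hasFDerivAt.comp z (hψd z).hasFDerivAt
    have hproj : HasFDerivAt (fun w => ψ w i)
        ((ContinuousLinearMap.proj i).comp (fderiv ℝ ψ z)) z := by
      exact hproj'
    have := dependsOnlyOn_deriv_zero (hdep i) hproj
      (fun j' => if j' = ℓ then 1 else 0)
      (fun j hj => by
        have : j ≠ ℓ := by rintro rfl; exact hℓ hj
        simp [this])
    have hps : Pi.single ℓ (1:ℝ) = fun j' => if j' = ℓ then (1:ℝ) else 0 :=
      funext fun j' => Pi.single_apply ℓ 1 j'
    rw [hps]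
    simpa using this
  -- Jacobian matrices of ψinv lie in the subalgebra
  have hBmem : ∀ v : Fin d → ℝ,
      LinearMap.toMatrix' ((fderiv ℝ ψinv v : (Fin d → ℝ) →L[ℝ] (Fin d → ℝ)) :
        (Fin d → ℝ) →ₗ[ℝ] (Fin d → ℝ)) ∈ lowerAlg E := by
    intro v
    set z := ψinv v with hz
    have hA : HasFDerivAt ψ (fderiv ℝ ψ z) z := (hψd z).hasFDerivAt
    have hB : HasFDerivAt ψinv (fderiv ℝ ψinv v) v := (hψinvd v).hasFDerivAt
    -- ψ ∘ ψinv = id : derivative composition at v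
    have hAB : (fderiv ℝ ψ z).comp (fderiv ℝ ψinv v) = ContinuousLinearMap.id ℝ _ := by
      have hcomp : HasFDerivAt (ψ ∘ ψinv) ((fderiv ℝ ψ z).comp (fderiv ℝ ψinv v)) v :=
        HasFDerivAt.comp v (by rwa [← hz]) hB
      have hid : (ψ ∘ ψinv) = id := funext fun w => hright w
      rw [hid] at hcomp
      exact hcomp.unique (hasFDerivAt_id v)
    -- ψinv ∘ ψ = id : derivative composition at z, noting ψ z = v
    have hψz : ψ z = v := hright v
    have hBA : (fderiv ℝ ψinv v).comp (fderiv ℝ ψ z) = ContinuousLinearMap.id ℝ _ := by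
      have hcomp : HasFDerivAt (ψinv ∘ ψ) ((fderiv ℝ ψinv v).comp (fderiv ℝ ψ z)) z :=
        HasFDerivAt.comp z (by rwa [hψz]) hA
      have hid : (ψinv ∘ ψ) = id := funext fun w => hleft w
      rw [hid] at hcomp
      exact hcomp.unique (hasFDerivAt_id z)
    -- pass to matrices
    set Am := LinearMap.toMatrix' ((fderiv ℝ ψ z : (Fin d → ℝ) →L[ℝ] (Fin d → ℝ)) :
      (Fin d → ℝ) →ₗ[ℝ] (Fin d → ℝ)) with hAm
    set Bm := LinearMap.toMatrix' ((fderiv ℝ ψinv v : (Fin d → ℝ) →L[ℝ] (Fin d → ℝ)) :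
      (Fin d → ℝ) →ₗ[ℝ] (Fin d → ℝ)) with hBm
    have hABm : Am * Bm = 1 := by
      rw [hAm, hBm, ← LinearMap.toMatrix'_comp, ← ContinuousLinearMap.toLinearMap_comp, hAB,
        ContinuousLinearMap.coe_id, LinearMap.toMatrix'_id]
    have hBAm : Bm * Am = 1 := by
      rw [hBm, hAm, ← LinearMap.toMatrix'_comp, ← ContinuousLinearMap.toLinearMap_comp, hBA,
        ContinuousLinearMap.coe_id, LinearMap.toMatrix'_id]
    exact lowerAlg_inv E (hAmem z) hABm hBAm
  -- conclude: each component of ψinv depends only on barDom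
  intro j v v' hvv'
  set u := v' - v with hu
  have hu0 : ∀ ℓ ∈ barDom E j, u ℓ = 0 := by
    intro ℓ hℓ
    simp [hu, hvv' ℓ hℓ]
  have hder : ∀ w : Fin d → ℝ, (fderiv ℝ ψinv w u) j = 0 := by
    intro w
    have hexp : fderiv ℝ ψinv w u
        = ∑ ℓ : Fin d, u ℓ • fderiv ℝ ψinv w (fun k => if ℓ = k then 1 else 0) := by
      conv_lhs => rw [pi_eq_sum_univ u]
      rw [map_sum]
      exact Finset.sum_congr rfl fun ℓ _ => _root_.map_smul _ _ _
    rw [hexp, Finset.sum_apply]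
    apply Finset.sum_eq_zero
    intro ℓ _
    rw [Pi.smul_apply, smul_eq_mul]
    by_cases hℓ : ℓ ∈ barDom E j
    · rw [hu0 ℓ hℓ, zero_mul]
    · have hB := hBmem w j ℓ hℓ
      rw [LinearMap.toMatrix'_apply] at hB
      simp only [ContinuousLinearMap.coe_coe] at hB
      have hps : Pi.single ℓ (1:ℝ) = fun j' => if j' = ℓ then (1:ℝ) else 0 :=
        funext fun j' => Pi.single_apply ℓ 1 j'
      rw [hps] at hB
      have hfl : (fun k => if ℓ = k then (1:ℝ) else 0)
          = fun j' => if j' = ℓ then (1:ℝ) else 0 := by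
        funext k; simp [eq_comm]
      rw [hfl, hB, mul_zero]
  have hg : ∀ t : ℝ, HasDerivAt (fun t : ℝ => ψinv (v + t • u) j) 0 t := by
    intro t
    have hline : HasDerivAt (fun t : ℝ => v + t • u) u t := by
      simpa using ((hasDerivAt_id t).smul_const u).const_add v
    have hproj' : HasFDerivAt (⇑(ContinuousLinearMap.proj j :
          (Fin d → ℝ) →L[ℝ] ℝ) ∘ ψinv)
        ((ContinuousLinearMap.proj j).comp (fderiv ℝ ψinv (v + t • u))) (v + t • u) :=
      (ContinuousLinearMap.proj j).hasFDerivAt.comp _ (hψinvd _).hasFDerivAt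
    have hproj : HasFDerivAt (fun w => ψinv w j)
        ((ContinuousLinearMap.proj j).comp (fderiv ℝ ψinv (v + t • u))) (v + t • u) := by
      exact hproj'
    have := HasFDerivAt.comp_hasDerivAt t hproj hline
    have h0 : ((ContinuousLinearMap.proj j).comp (fderiv ℝ ψinv (v + t • u))) u = 0 := by
      simpa using hder (v + t • u)
    rw [h0] at this
    exact this
  have hconst : ψinv (v + (0:ℝ) • u) j = ψinv (v + (1:ℝ) • u) j :=
    is_const_of_deriv_eq_zero (fun t => (hg t).differentiableAt)
      (fun t => (hg t).deriv) 0 1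
  have h0 : v + (0:ℝ) • u = v := by simp
  have h1 : v + (1:ℝ) • u = v' := by rw [one_smul, hu]; abel
  rw [h0, h1] at hconst
  exact hconst
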